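/- The function f₀(x) = ln Γ(x+1) − ln √(2π) − (x + 1/2) ln x + x − (x/2) ln(x sinh(1/x)) − 7/(324 x³(35x² + 33)) tends to 0 as x → ∞. -/

import Mathlib

open Real Filter Topology

lemma sinh_le_poly {u : ℝ} (hu : 0 ≤ u) (hu1 : u ≤ 1) : Real.sinh u ≤ u + u ^ 3 := by
  have h1 := Real.exp_bound (x := u) (by rwa [abs_of_nonneg hu]) (n := 3) (by norm_num)
  have h2 := Real.exp_bound (x := -u) (by rwa [abs_neg, abs_of_nonneg hu]) (n := 3) (by norm_num)
  rw [abs_of_nonneg hu] at h1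
  rw [abs_neg, abs_of_nonneg hu] at h2
  simp only [Finset.sum_range_succ, Finset.sum_range_zero] at h1 h2
  norm_num at h1 h2
  rw [abs_le] at h1 h2
  rw [Real.sinh_eq]
  nlinarith [h1.1, h1.2, h2.1, h2.2]

lemma stirling_nat : Tendsto (fun n : ℕ => Real.log (n.factorial) - ((n : ℝ) + 1/2) * Real.log n + n)
    atTop (𝓝 (Real.log (Real.sqrt (2 * Real.pi)))) := by
  have hpi : (0:ℝ) < Real.sqrt π := Real.sqrt_pos.2 Real.pi_pos
  have h := (Stirling.tendsto_stirlingSeq_sqrt_pi.log hpi.ne').add_const (1/2 * Real.log 2)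
  have hL : Real.log (Real.sqrt π) + 1/2 * Real.log 2 = Real.log (Real.sqrt (2 * π)) := by
    rw [Real.log_sqrt Real.pi_pos.le, Real.log_sqrt (by positivity),
      Real.log_mul two_ne_zero Real.pi_pos.ne']
    ring
  rw [hL] at h
  refine h.congr' ?_
  filter_upwards [eventually_ge_atTop 1] with n hn
  have hn0 : (0:ℝ) < (n:ℝ) := by exact_mod_cast hn
  rw [Stirling.log_stirlingSeq_formula, Real.log_div hn0.ne' (Real.exp_ne_zero 1),
    Real.log_mul two_ne_zero hn0.ne', Real.log_exp]
  ring

-- Upper bound: log Γ(x+1) ≤ log n! + t log(n+1)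
lemma logGamma_upper {n : ℕ} {x : ℝ} (hn : 2 ≤ (n:ℝ)) (h1 : (n:ℝ) ≤ x) (h2 : x < n + 1) :
    Real.log (Real.Gamma (x+1)) ≤ Real.log (n.factorial) + (x - n) * Real.log ((n:ℝ)+1) := by
  set N : ℝ := (n : ℝ) with hN
  set t : ℝ := x - N with ht
  have ht0 : 0 ≤ t := by simp [ht]; linarith
  have ht1 : t ≤ 1 := by simp [ht]; linarith
  have hfac : (0:ℝ) < (n.factorial : ℝ) := by exact_mod_cast n.factorial_pos
  have h := Real.convexOn_log_Gamma.2 (Set.mem_Ioi.2 (by linarith : (0:ℝ) < N + 1))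
    (Set.mem_Ioi.2 (by linarith : (0:ℝ) < N + 2)) (by linarith : (0:ℝ) ≤ 1 - t) ht0 (by ring)
  simp only [smul_eq_mul, Function.comp_apply] at h
  have harg : (1 - t) * (N + 1) + t * (N + 2) = x + 1 := by rw [ht]; ring
  rw [harg] at h
  have hg1 : Real.Gamma (N + 1) = n.factorial := Real.Gamma_nat_eq_factorial n
  have hg2 : Real.Gamma (N + 2) = (N + 1) * n.factorial := by
    have : N + 2 = (N + 1) + 1 := by ring
    rw [this, Real.Gamma_add_one (by linarith : N + 1 ≠ 0), hg1]
  rw [hg1, hg2, Real.log_mul (by linarith : N + 1 ≠ 0) hfac.ne'] at h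
  linarith

-- Lower bound: log Γ(x+1) ≥ log n! + t log n
lemma logGamma_lower {n : ℕ} {x : ℝ} (hn : 2 ≤ (n:ℝ)) (h1 : (n:ℝ) ≤ x) (h2 : x < n + 1) :
    Real.log (n.factorial) + (x - n) * Real.log (n:ℝ) ≤ Real.log (Real.Gamma (x+1)) := by
  set N : ℝ := (n : ℝ) with hN
  set t : ℝ := x - N with ht
  have hN0 : (0:ℝ) < N := by linarith
  have hfac : (0:ℝ) < (n.factorial : ℝ) := by exact_mod_cast n.factorial_pos
  have hg1 : Real.Gamma (N + 1) = n.factorial := Real.Gamma_nat_eq_factorial n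
  rcases eq_or_lt_of_le (show 0 ≤ t by simp [ht]; linarith) with h0 | htpos
  · have hx : x = N := by simp [ht] at h0; linarith
    rw [hx, ← h0, hg1]; simp
  · have h1t : (0:ℝ) < 1 + t := by linarith
    have h := Real.convexOn_log_Gamma.2 (Set.mem_Ioi.2 hN0)
      (Set.mem_Ioi.2 (by linarith : (0:ℝ) < x + 1))
      (by positivity : (0:ℝ) ≤ t / (1 + t)) (by positivity : (0:ℝ) ≤ 1 / (1 + t))
      (by rw [← add_div, add_comm t 1, div_self h1t.ne'])
    simp only [smul_eq_mul, Function.comp_apply] at h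
    have harg : t / (1 + t) * N + 1 / (1 + t) * (x + 1) = N + 1 := by
      rw [div_mul_eq_mul_div, div_mul_eq_mul_div, ← add_div, div_eq_iff h1t.ne']; rw [ht]; ring
    rw [harg] at h
    have hgN : Real.log (Real.Gamma (N + 1)) = Real.log N + Real.log (Real.Gamma N) := by
      rw [Real.Gamma_add_one hN0.ne', Real.log_mul hN0.ne' (Real.Gamma_pos_of_pos hN0).ne']
    have hcomb : t / (1 + t) * Real.log (Real.Gamma N) + 1 / (1 + t) * Real.log (Real.Gamma (x+1))
        = (t * Real.log (Real.Gamma N) + Real.log (Real.Gamma (x+1))) / (1 + t) := by ring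
    rw [hcomb, le_div_iff₀ h1t, hg1] at h
    rw [hg1] at hgN
    nlinarith [h, hgN]

lemma key_arith {N t G F lN a b : ℝ} (hN : 2 ≤ N) (ht0 : 0 ≤ t) (ht1 : t ≤ 1)
    (ha0 : 0 ≤ a) (ha1 : a ≤ 1/N) (hb1 : b ≤ t/N) (hb2 : t/(N+t) ≤ b)
    (hA : G ≤ F + t * (lN + a)) (hB : F + t * lN ≤ G) :
    |G - (N + t + 1/2) * (lN + b) + (N + t) - (F - (N + 1/2) * lN + N)| ≤ 2/N := by
  have hN0 : (0:ℝ) < N := by linarith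
  have hNt : (0:ℝ) < N + t := by linarith
  have h4 : t ≤ (N + t + 1/2) * (t/(N+t)) := by
    rw [mul_div_assoc', le_div_iff₀ hNt]; nlinarith
  have h3 : (N + t + 1/2) * (t/(N+t)) ≤ (N + t + 1/2) * b :=
    mul_le_mul_of_nonneg_left hb2 (by linarith)
  have h5 : (N + t + 1/2) * b ≤ (N + t + 1/2) * (t/N) :=
    mul_le_mul_of_nonneg_left hb1 (by linarith)
  have h6 : (N + t + 1/2) * (t/N) ≤ t + 2/N := by
    rw [mul_div_assoc', div_le_iff₀ hN0]
    have : (t + 2/N) * N = t * N + 2 := by field_simp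
    rw [this]; nlinarith
  have h7 : t * a ≤ 1/N := le_trans (mul_le_of_le_one_left ha0 ht1) ha1
  have h8 : 0 ≤ t * a := mul_nonneg ht0 ha0
  have h9 : (1:ℝ)/N ≤ 2/N := by
    have := inv_nonneg.mpr hN0.le
    rw [div_eq_mul_inv, div_eq_mul_inv]; nlinarith
  have expand : G - (N + t + 1/2) * (lN + b) + (N + t) - (F - (N + 1/2) * lN + N)
      = (G - (F + t * lN)) + (t - (N + t + 1/2) * b) := by ring
  rw [abs_le, expand]
  constructor <;> linarith

lemma key_bound {n : ℕ} {x : ℝ} (hn : 2 ≤ (n:ℝ)) (h1 : (n:ℝ) ≤ x) (h2 : x < n + 1) :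
    |(Real.log (Real.Gamma (x+1)) - (x + 1/2) * Real.log x + x)
      - (Real.log (n.factorial) - ((n:ℝ) + 1/2) * Real.log n + n)| ≤ 2 / n := by
  have hN0 : (0:ℝ) < (n:ℝ) := by linarith
  have ht0 : 0 ≤ x - (n:ℝ) := by linarith
  have ht1 : x - (n:ℝ) ≤ 1 := by linarith
  have hx0 : (0:ℝ) < x := by linarith
  have hpos : (0:ℝ) < 1 + (x - (n:ℝ))/(n:ℝ) := by
    have := div_nonneg ht0 hN0.le; linarith
  have e1 : Real.log ((n:ℝ) + 1) = Real.log (n:ℝ) + Real.log (1 + 1/(n:ℝ)) := by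
    rw [← Real.log_mul hN0.ne' (by positivity : (0:ℝ) < 1 + 1/(n:ℝ)).ne']
    congr 1; field_simp
  have e2 : Real.log x = Real.log (n:ℝ) + Real.log (1 + (x - (n:ℝ))/(n:ℝ)) := by
    rw [← Real.log_mul hN0.ne' hpos.ne']
    congr 1; field_simp; ring
  have ha0 : 0 ≤ Real.log (1 + 1/(n:ℝ)) := Real.log_nonneg
    (by
      have h : (0:ℝ) ≤ 1/(n:ℝ) := by positivity
      linarith)
  have ha1 : Real.log (1 + 1/(n:ℝ)) ≤ 1/(n:ℝ) := by
    have := Real.log_le_sub_one_of_pos (by positivity : (0:ℝ) < 1 + 1/(n:ℝ)); linarith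
  have hb1 : Real.log (1 + (x - (n:ℝ))/(n:ℝ)) ≤ (x - (n:ℝ))/(n:ℝ) := by
    have := Real.log_le_sub_one_of_pos hpos; linarith
  have hb2 : (x - (n:ℝ))/((n:ℝ) + (x - (n:ℝ))) ≤ Real.log (1 + (x - (n:ℝ))/(n:ℝ)) := by
    have h := Real.one_sub_inv_le_log_of_pos hpos
    have heq : 1 - (1 + (x - (n:ℝ))/(n:ℝ))⁻¹ = (x - (n:ℝ))/((n:ℝ) + (x - (n:ℝ))) := by
      rw [inv_eq_one_div]; field_simp; ring
    linarith [heq ▸ h]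
  have hA := logGamma_upper hn h1 h2
  have hB := logGamma_lower hn h1 h2
  rw [e1] at hA
  have main := key_arith (G := Real.log (Real.Gamma (x+1))) (F := Real.log (n.factorial))
    (lN := Real.log (n:ℝ)) hn ht0 ht1 ha0 ha1 hb1 hb2 hA hB
  have hshape : (Real.log (Real.Gamma (x+1)) - (x + 1/2) * Real.log x + x)
      - (Real.log (n.factorial) - ((n:ℝ) + 1/2) * Real.log n + n)
      = Real.log (Real.Gamma (x+1)) - ((n:ℝ) + (x - (n:ℝ)) + 1/2)
          * (Real.log (n:ℝ) + Real.log (1 + (x - (n:ℝ))/(n:ℝ))) + ((n:ℝ) + (x - (n:ℝ)))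
        - (Real.log (n.factorial) - ((n:ℝ) + 1/2) * Real.log (n:ℝ) + n) := by
    rw [e2]; ring
  rw [hshape]
  exact main

lemma stirling_real :
    Tendsto (fun x : ℝ => Real.log (Real.Gamma (x+1)) - (x + 1/2) * Real.log x + x)
      atTop (𝓝 (Real.log (Real.sqrt (2 * Real.pi)))) := by
  have hfl : Tendsto (fun x : ℝ => ⌊x⌋₊) atTop atTop := tendsto_nat_floor_atTop
  have hs := stirling_nat
  have hz : Tendsto (fun n : ℕ => 2 / (n:ℝ)) atTop (𝓝 0) :=
    tendsto_const_div_atTop_nhds_zero_nat 2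
  have hlo : Tendsto (fun x : ℝ => (Real.log ((⌊x⌋₊).factorial) - ((⌊x⌋₊:ℝ) + 1/2)
      * Real.log ⌊x⌋₊ + ⌊x⌋₊) - 2 / (⌊x⌋₊:ℝ)) atTop (𝓝 (Real.log (Real.sqrt (2 * Real.pi)))) := by
    have := (hs.sub hz).comp hfl
    rw [sub_zero] at this
    exact this
  have hhi : Tendsto (fun x : ℝ => (Real.log ((⌊x⌋₊).factorial) - ((⌊x⌋₊:ℝ) + 1/2)
      * Real.log ⌊x⌋₊ + ⌊x⌋₊) + 2 / (⌊x⌋₊:ℝ)) atTop (𝓝 (Real.log (Real.sqrt (2 * Real.pi)))) := by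
    have := (hs.add hz).comp hfl
    rw [add_zero] at this
    exact this
  refine tendsto_of_tendsto_of_tendsto_of_le_of_le' hlo hhi ?_ ?_ <;>
  · filter_upwards [eventually_ge_atTop (2:ℝ)] with x hx
    have hn2 : (2:ℝ) ≤ (⌊x⌋₊:ℝ) := by
      have : (2:ℕ) ≤ ⌊x⌋₊ := Nat.le_floor (by exact_mod_cast hx)
      exact_mod_cast this
    have hfle : ((⌊x⌋₊:ℝ)) ≤ x := Nat.floor_le (by linarith)
    have hlt : x < (⌊x⌋₊:ℝ) + 1 := Nat.lt_floor_add_one x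
    have := key_bound hn2 hfle hlt
    rw [abs_le] at this
    linarith [this.1, this.2]

lemma sinh_term_tendsto :
    Tendsto (fun x : ℝ => x / 2 * Real.log (x * Real.sinh (1/x))) atTop (𝓝 0) := by
  have hhi : Tendsto (fun x : ℝ => 1 / (2 * x)) atTop (𝓝 0) :=
    tendsto_const_nhds.div_atTop (tendsto_id.const_mul_atTop two_pos)
  refine tendsto_of_tendsto_of_tendsto_of_le_of_le' tendsto_const_nhds hhi ?_ ?_ <;>
    filter_upwards [eventually_ge_atTop (1:ℝ)] with x hx
  · -- 0 ≤ x/2 * log (x * sinh (1/x))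
    have hx0 : (0:ℝ) < x := by linarith
    have hu0 : (0:ℝ) < 1/x := by positivity
    have h1 : 1/x < Real.sinh (1/x) := Real.self_lt_sinh_iff.2 hu0
    have : (1:ℝ) ≤ x * Real.sinh (1/x) := by
      calc (1:ℝ) = x * (1/x) := by field_simp
      _ ≤ x * Real.sinh (1/x) := by nlinarith
    have := Real.log_nonneg this
    positivity
  · have hx0 : (0:ℝ) < x := by linarith
    have hu0 : (0:ℝ) ≤ 1/x := by positivity
    have hu1 : 1/x ≤ 1 := by rw [div_le_one hx0]; linarith
    have hsinh := sinh_le_poly hu0 hu1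
    have hb : x * Real.sinh (1/x) ≤ 1 + 1/x^2 := by
      have : x * (1/x + (1/x)^3) = 1 + 1/x^2 := by field_simp
      nlinarith
    have hpos : (0:ℝ) < x * Real.sinh (1/x) := by
      have : (0:ℝ) < Real.sinh (1/x) := Real.sinh_pos_iff.2 (by positivity)
      positivity
    have hlog : Real.log (x * Real.sinh (1/x)) ≤ 1/x^2 := by
      calc Real.log (x * Real.sinh (1/x)) ≤ Real.log (1 + 1/x^2) :=
            Real.log_le_log hpos hb
        _ ≤ 1/x^2 := by
            have := Real.log_le_sub_one_of_pos (show (0:ℝ) < 1 + 1/x^2 by positivity)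
            linarith
    calc x / 2 * Real.log (x * Real.sinh (1/x)) ≤ x / 2 * (1/x^2) := by
          apply mul_le_mul_of_nonneg_left hlog (by linarith)
      _ = 1 / (2 * x) := by field_simp

lemma tail_term_tendsto :
    Tendsto (fun x : ℝ => 7 / (324 * x ^ 3 * (35 * x ^ 2 + 33))) atTop (𝓝 0) := by
  apply Tendsto.div_atTop (tendsto_const_nhds (x := (7:ℝ)))
  apply tendsto_atTop_mono' _ _ tendsto_id
  filter_upwards [eventually_ge_atTop (1:ℝ)] with x hx
  have : (0:ℝ) < x := by linarith
  have h3 : x ≤ x ^ 3 := by nlinarith [sq_nonneg (x - 1), sq_nonneg (x + 1)]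
  have h4 : (33:ℝ) ≤ 35 * x ^ 2 + 33 := by nlinarith
  have h5 : 324 * x ^ 3 * 33 ≤ 324 * x ^ 3 * (35 * x ^ 2 + 33) := by
    apply mul_le_mul_of_nonneg_left h4 (by positivity)
  simp only [id]
  nlinarith

noncomputable def f₀ (x : ℝ) : ℝ :=
  Real.log (Real.Gamma (x + 1)) - Real.log (Real.sqrt (2 * Real.pi))
    - (x + 1 / 2) * Real.log x + x - x / 2 * Real.log (x * Real.sinh (1 / x))
    - 7 / (324 * x ^ 3 * (35 * x ^ 2 + 33))

theorem f₀_tendsto_zero : Filter.Tendsto f₀ Filter.atTop (nhds 0) := by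
  have h := ((stirling_real.sub_const (Real.log (Real.sqrt (2 * Real.pi)))).sub
    sinh_term_tendsto).sub tail_term_tendsto
  rw [sub_self, sub_zero, sub_zero] at h
  refine h.congr (fun x => ?_)
  unfold f₀
  ring
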